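/- For every base β > 1 and every n ≥ 1, the number of admissible words of length n in the β-expansion (i.e., prefixes of length n of β-expansions of points in [0,1)) satisfies β^n ≤ #Σ_n(β) ≤ β^{n+1}/(β-1). -/

import Mathlib

open MeasureTheory Set
open scoped Classical

/-- The beta-transformation `T_β x = βx - ⌊βx⌋`. -/
noncomputable def betaT (β x : ℝ) : ℝ := Int.fract (β * x)

/-- The `k`-th digit (0-indexed) of the β-expansion of `x`: `ε_{k+1}(x,β) = ⌊β T_β^k x⌋`. -/
noncomputable def betaDigit (β x : ℝ) (k : ℕ) : ℕ := ⌊β * (betaT β)^[k] x⌋₊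

/-- `Σ_n(β)`: admissible words of length `n`, i.e. prefixes of β-expansions of points of `[0,1)`. -/
def admWords (β : ℝ) (n : ℕ) : Set (Fin n → ℕ) :=
  {w | ∃ x ∈ Set.Ico (0:ℝ) 1, ∀ i : Fin n, w i = betaDigit β x i}

/-- The cylinder `𝔍(w)` of points of `[0,1)` whose β-expansion starts with `w`. -/
def cyl (β : ℝ) {n : ℕ} (w : Fin n → ℕ) : Set ℝ :=
  {x | x ∈ Set.Ico (0:ℝ) 1 ∧ ∀ i : Fin n, betaDigit β x i = w i}

/-- `Ξ_n(β)`: admissible words of length `n` whose cylinder is full (of length `β^{-n}`). -/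
def fullWords (β : ℝ) (n : ℕ) : Set (Fin n → ℕ) :=
  {w | w ∈ admWords β n ∧ volume (cyl β w) = ENNReal.ofReal (1 / β ^ n)}

/-- `ε(β)`: the β-expansion of 1 (0-indexed). -/
noncomputable def eps1 (β : ℝ) (k : ℕ) : ℕ := betaDigit β 1 k

/-- `ε*(β)`: the infinite β-expansion of 1.  If `ε(β)` has a last nonzero digit at
(0-indexed) position `N`, it is the periodic sequence `(ε_0 ⋯ ε_{N-1} (ε_N - 1))^∞`;
otherwise it is `ε(β)` itself. -/

noncomputable def epsStar (β : ℝ) : ℕ → ℕ :=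
  if h : ∃ N, eps1 β N ≠ 0 ∧ ∀ k, N < k → eps1 β k = 0 then
    fun k => if k % (h.choose + 1) = h.choose then eps1 β h.choose - 1
             else eps1 β (k % (h.choose + 1))
  else eps1 β

/-- Strict lexicographic order on sequences of nonnegative integers. -/
def lexLt (a b : ℕ → ℕ) : Prop := ∃ i, (∀ j, j < i → a j = b j) ∧ a i < b i

/-- Strict lexicographic order on words of length `n`. -/
def wordLt {n : ℕ} (a b : Fin n → ℕ) : Prop :=
  ∃ i : Fin n, (∀ j, j < i → a j = b j) ∧ a i < b i

/-- `Ω_n(x)`: all length-`n` prefixes of β-expansions of `x` over all bases `β > 1`. -/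
def prefWords (x : ℝ) (n : ℕ) : Set (Fin n → ℕ) :=
  {w | ∃ β : ℝ, 1 < β ∧ ∀ i : Fin n, w i = betaDigit β x i}

/-- The parameter cylinder `I(w) = {β > 1 : ε_1(x,β)⋯ε_n(x,β) = w}`. -/
def pcyl (x : ℝ) {n : ℕ} (w : Fin n → ℕ) : Set ℝ :=
  {β | 1 < β ∧ ∀ i : Fin n, betaDigit β x i = w i}

/-- `Λ_n(x)`: words whose parameter cylinder is full, i.e. `{T_β^n x : β ∈ I(w)} = [0,1)`. -/
def pfull (x : ℝ) (n : ℕ) : Set (Fin n → ℕ) :=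
  {w | w ∈ prefWords x n ∧ (fun β => (betaT β)^[n] x) '' pcyl x w = Set.Ico (0:ℝ) 1}

namespace BetaAux

variable {β : ℝ}

lemma betaT_mem (x : ℝ) : betaT β x ∈ Set.Ico (0:ℝ) 1 :=
  ⟨Int.fract_nonneg _, Int.fract_lt_one _⟩

lemma iter_mem {x : ℝ} (hx : x ∈ Set.Ico (0:ℝ) 1) : ∀ k, (betaT β)^[k] x ∈ Set.Ico (0:ℝ) 1
  | 0 => hx
  | (k+1) => by rw [Function.iterate_succ_apply']; exact betaT_mem _

lemma digit_zero (x : ℝ) : betaDigit β x 0 = ⌊β * x⌋₊ := by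
  simp [betaDigit]

lemma digit_shift (x : ℝ) (k : ℕ) : betaDigit β x (k+1) = betaDigit β (betaT β x) k := by
  simp [betaDigit, Function.iterate_succ_apply]

lemma betaT_eq (hb0 : 0 < β) {x : ℝ} (hx : 0 ≤ x) :
    betaT β x = β * x - (betaDigit β x 0 : ℝ) := by
  have h0 : (0:ℝ) ≤ β * x := mul_nonneg hb0.le hx
  rw [digit_zero, natCast_floor_eq_intCast_floor h0, betaT, ← Int.self_sub_floor]

/-- partial sum of the expansion -/
noncomputable def vpre (β : ℝ) (n : ℕ) (x : ℝ) : ℝ :=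
  ∑ i ∈ Finset.range n, (betaDigit β x i : ℝ) / β ^ (i+1)

lemma vpre_nonneg (hb1 : 1 < β) (n : ℕ) (x : ℝ) : 0 ≤ vpre β n x := by
  have hb0 : (0:ℝ) < β := lt_trans one_pos hb1
  refine Finset.sum_nonneg fun i _ => ?_
  positivity

lemma vpre_succ (hb1 : 1 < β) (n : ℕ) (x : ℝ) :
    vpre β (n+1) x = (betaDigit β x 0 : ℝ) / β + vpre β n (betaT β x) / β := by
  rw [vpre, Finset.sum_range_succ', vpre]
  have h : ∀ i ∈ Finset.range n, (betaDigit β x (i+1) : ℝ) / β ^ (i+1+1)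
      = ((betaDigit β (betaT β x) i : ℝ) / β ^ (i+1)) / β := by
    intro i _
    rw [digit_shift, pow_succ]
    ring
  rw [Finset.sum_congr rfl h, ← Finset.sum_div]
  norm_num [add_comm]

lemma expand (hb1 : 1 < β) : ∀ n, ∀ x ∈ Set.Ico (0:ℝ) 1,
    x = vpre β n x + (betaT β)^[n] x / β ^ n := by
  intro n
  induction n with
  | zero => intro x hx; simp [vpre]
  | succ n ih =>
    intro x hx
    have hb0 : (0:ℝ) < β := lt_trans one_pos hb1
    have hbn : (0:ℝ) < β ^ n := pow_pos hb0 n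
    have hT : betaT β x = β * x - (betaDigit β x 0 : ℝ) := betaT_eq hb0 hx.1
    have IH := ih (betaT β x) (betaT_mem x)
    have hne : β ≠ 0 := ne_of_gt hb0
    have IH' : (betaT β)^[n] (betaT β x) = (betaT β x - vpre β n (betaT β x)) * β ^ n := by
      have h := IH
      field_simp at h
      linarith
    rw [vpre_succ hb1, Function.iterate_succ_apply, pow_succ, IH', hT]
    field_simp
    ring

lemma digits_of_between (hb1 : 1 < β) : ∀ n, ∀ x ∈ Set.Ico (0:ℝ) 1, ∀ y,
    vpre β n x ≤ y → y ≤ x → ∀ k < n, betaDigit β y k = betaDigit β x k := by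
  intro n
  induction n with
  | zero => intro x _ y _ _ k hk; omega
  | succ n ih =>
    intro x hx y h1 h2 k hk
    have hb0 : (0:ℝ) < β := lt_trans one_pos hb1
    have hy0 : 0 ≤ y := le_trans (vpre_nonneg hb1 _ _) h1
    have hTx : betaT β x = β * x - (betaDigit β x 0 : ℝ) := betaT_eq hb0 hx.1
    have hTx01 : betaT β x ∈ Set.Ico (0:ℝ) 1 := betaT_mem x
    have hv : vpre β (n+1) x = (betaDigit β x 0 : ℝ) / β + vpre β n (betaT β x) / β :=
      vpre_succ hb1 n x
    have hvn : 0 ≤ vpre β n (betaT β x) := vpre_nonneg hb1 _ _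
    have hlow : (betaDigit β x 0 : ℝ) + vpre β n (betaT β x) ≤ β * y := by
      have h1' := h1
      rw [hv] at h1'
      have := mul_le_mul_of_nonneg_left h1' hb0.le
      calc (betaDigit β x 0 : ℝ) + vpre β n (betaT β x)
          = β * ((betaDigit β x 0 : ℝ) / β + vpre β n (betaT β x) / β) := by
            field_simp
        _ ≤ β * y := this
    have hhigh : β * y < (betaDigit β x 0 : ℝ) + 1 := by
      have hyx : β * y ≤ β * x := mul_le_mul_of_nonneg_left h2 hb0.le
      have : β * x = (betaDigit β x 0 : ℝ) + betaT β x := by linarith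
      have := hTx01.2
      nlinarith
    have hd0 : betaDigit β y 0 = betaDigit β x 0 := by
      rw [digit_zero]
      rw [Nat.floor_eq_iff (mul_nonneg hb0.le hy0)]
      exact ⟨by linarith, hhigh⟩
    match k with
    | 0 => exact hd0
    | (k+1) =>
      have hTy : betaT β y = β * y - (betaDigit β x 0 : ℝ) := by
        rw [betaT_eq hb0 hy0, hd0]
      have hTylow : vpre β n (betaT β x) ≤ betaT β y := by rw [hTy]; linarith
      have hTyx : betaT β y ≤ betaT β x := by
        have := mul_le_mul_of_nonneg_left h2 hb0.le
        rw [hTy, hTx]; linarith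
      have := ih (betaT β x) hTx01 (betaT β y) hTylow hTyx k (by omega)
      rw [digit_shift, digit_shift, this]

/-- value of a word -/
noncomputable def vw (β : ℝ) {n : ℕ} (w : Fin n → ℕ) : ℝ :=
  ∑ i : Fin n, (w i : ℝ) / β ^ ((i : ℕ) + 1)

lemma vpre_eq_vw {n : ℕ} {w : Fin n → ℕ} {x : ℝ} (hx : x ∈ cyl β w) :
    vpre β n x = vw β w := by
  rw [vpre, Finset.sum_range fun i => (betaDigit β x i : ℝ) / β ^ (i+1), vw]
  exact Finset.sum_congr rfl fun i _ => by rw [hx.2 i]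

lemma vw_nonneg (hb1 : 1 < β) {n : ℕ} (w : Fin n → ℕ) : 0 ≤ vw β w := by
  have hb0 : (0:ℝ) < β := lt_trans one_pos hb1
  refine Finset.sum_nonneg fun i _ => by positivity

lemma cyl_subset_Ico (hb1 : 1 < β) {n : ℕ} (w : Fin n → ℕ) :
    cyl β w ⊆ Set.Ico (vw β w) (vw β w + (β ^ n)⁻¹) := by
  intro x hx
  have hb0 : (0:ℝ) < β := lt_trans one_pos hb1
  have hbn : (0:ℝ) < β ^ n := pow_pos hb0 n
  have hex := expand hb1 n x hx.1
  have hT := iter_mem (β := β) hx.1 n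
  rw [vpre_eq_vw hx] at hex
  constructor
  · have : 0 ≤ (betaT β)^[n] x / β ^ n := div_nonneg hT.1 hbn.le
    linarith
  · have : (betaT β)^[n] x / β ^ n < (β ^ n)⁻¹ := by
      rw [div_lt_iff₀ hbn, inv_mul_cancel₀ hbn.ne']
      exact hT.2
    linarith

lemma Icc_subset_cyl (hb1 : 1 < β) {n : ℕ} (w : Fin n → ℕ) {x : ℝ} (hx : x ∈ cyl β w) :
    Set.Icc (vw β w) x ⊆ cyl β w := by
  intro y hy
  have hvw : vpre β n x = vw β w := vpre_eq_vw hx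
  have hy01 : y ∈ Set.Ico (0:ℝ) 1 :=
    ⟨le_trans (vw_nonneg hb1 w) hy.1, lt_of_le_of_lt hy.2 hx.1.2⟩
  refine ⟨hy01, fun i => ?_⟩
  rw [digits_of_between hb1 n x hx.1 y (hvw ▸ hy.1) hy.2 i i.isLt]
  exact hx.2 i

lemma cyl_ordConnected (hb1 : 1 < β) {n : ℕ} (w : Fin n → ℕ) :
    (cyl β w).OrdConnected := by
  constructor
  intro x1 hx1 x2 hx2 y hy
  exact Icc_subset_cyl hb1 w hx2 ⟨le_trans (cyl_subset_Ico hb1 w hx1).1 hy.1, hy.2⟩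

lemma cyl_disjoint (hb1 : 1 < β) {n : ℕ} :
    (Set.univ : Set (Fin n → ℕ)).PairwiseDisjoint (cyl β) := by
  intro w _ w' _ hne
  rw [Function.onFun, Set.disjoint_left]
  intro x hx hx'
  exact hne (funext fun i => by rw [← hx.2 i, ← hx'.2 i])

lemma adm_finite (hb1 : 1 < β) (n : ℕ) : (admWords β n).Finite := by
  have hb0 : (0:ℝ) < β := lt_trans one_pos hb1
  have hsub : admWords β n ⊆ Set.pi Set.univ fun _ : Fin n => Set.Iic ⌊β⌋₊ := by
    rintro w ⟨x, hx, hw⟩ i _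
    rw [hw i]
    have hT := iter_mem (β := β) hx (i : ℕ)
    have : β * (betaT β)^[(i:ℕ)] x ≤ β := by nlinarith [hT.1, hT.2]
    exact Nat.floor_le_floor this
  exact (Set.Finite.pi fun _ => Set.finite_Iic _).subset hsub

lemma vol_cyl_ne_top {n : ℕ} (w : Fin n → ℕ) : volume (cyl β w) ≠ ⊤ := by
  have h : volume (cyl β w) ≤ volume (Set.Ico (0:ℝ) 1) :=
    measure_mono fun x hx => hx.1
  rw [Real.volume_Ico] at h
  exact ne_top_of_le_ne_top (by simp) h

lemma sum_vol_le_one (hb1 : 1 < β) (n : ℕ) :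
    ∑ w ∈ (adm_finite hb1 n).toFinset, (volume (cyl β w)).toReal ≤ 1 := by
  set s := (adm_finite hb1 n).toFinset with hs
  have hmeas : ∀ w ∈ s, MeasurableSet (cyl β w) := fun w _ =>
    (cyl_ordConnected hb1 w).measurableSet
  have hdisj : (↑s : Set (Fin n → ℕ)).PairwiseDisjoint (cyl β) :=
    (cyl_disjoint hb1).subset (Set.subset_univ _)
  have hsum : ∑ w ∈ s, volume (cyl β w) = volume (⋃ w ∈ s, cyl β w) :=
    (measure_biUnion_finset hdisj hmeas).symm
  have hle : volume (⋃ w ∈ s, cyl β w) ≤ volume (Set.Ico (0:ℝ) 1) :=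
    measure_mono (Set.iUnion₂_subset fun w _ x hx => hx.1)
  calc ∑ w ∈ s, (volume (cyl β w)).toReal
      = (∑ w ∈ s, volume (cyl β w)).toReal :=
        (ENNReal.toReal_sum fun w _ => vol_cyl_ne_top w).symm
    _ ≤ (volume (Set.Ico (0:ℝ) 1)).toReal := by
        refine ENNReal.toReal_mono (by rw [Real.volume_Ico]; simp) ?_
        rw [hsum]; exact hle
    _ = 1 := by rw [Real.volume_Ico]; norm_num

lemma fiber_card (hb1 : 1 < β) (n : ℕ) (w : Fin n → ℕ)
    (t : Finset (Fin (n+1) → ℕ)) (ht : ∀ u ∈ t, u ∈ admWords β (n+1) ∧ Fin.init u = w) :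
    (t.card : ℝ) ≤ β ^ (n+1) * (volume (cyl β w)).toReal + 1 := by
  have hb0 : (0:ℝ) < β := lt_trans one_pos hb1
  rcases t.eq_empty_or_nonempty with rfl | ht'
  · simp
    positivity
  obtain ⟨u₀, hu₀t, hmax⟩ := t.exists_max_image (fun u => u (Fin.last n)) ht'
  have hcard : t.card ≤ u₀ (Fin.last n) + 1 := by
    have := Finset.card_le_card_of_injOn (fun u => u (Fin.last n))
      (fun u hu => Finset.mem_range.2 (Nat.lt_succ_of_le (hmax u hu))) ?_
    · simpa using this
    · intro u hu u' hu' h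
      have h2 : Fin.snoc (Fin.init u) (u (Fin.last n))
          = Fin.snoc (Fin.init u') (u' (Fin.last n)) := by
        rw [(ht u hu).2, (ht u' hu').2]
        simp only at h
        rw [h]
      rwa [Fin.snoc_init_self, Fin.snoc_init_self] at h2
  obtain ⟨x, hx, hux⟩ := (ht u₀ hu₀t).1
  have hxc : x ∈ cyl β w := by
    refine ⟨hx, fun i => ?_⟩
    rw [← (ht u₀ hu₀t).2]
    rw [Fin.init]
    rw [hux i.castSucc]
    congr 1
  have hTn := iter_mem (β := β) hx n
  have hM : (u₀ (Fin.last n) : ℝ) ≤ β * (betaT β)^[n] x := by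
    have h1 : u₀ (Fin.last n) = betaDigit β x n := by
      rw [hux (Fin.last n)]
      simp [Fin.val_last]
    rw [h1]
    exact Nat.floor_le (mul_nonneg hb0.le hTn.1)
  have hexp := expand hb1 n x hx
  rw [vpre_eq_vw hxc] at hexp
  have hbn : (0:ℝ) < β ^ n := pow_pos hb0 n
  have hT : (betaT β)^[n] x = (x - vw β w) * β ^ n := by
    field_simp at hexp
    linarith
  have hvwx : vw β w ≤ x := (cyl_subset_Ico hb1 w hxc).1
  have hvol : x - vw β w ≤ (volume (cyl β w)).toReal := by
    have hsub : volume (Set.Icc (vw β w) x) ≤ volume (cyl β w) :=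
      measure_mono (Icc_subset_cyl hb1 w hxc)
    rw [Real.volume_Icc] at hsub
    have h2 := ENNReal.toReal_mono (vol_cyl_ne_top w) hsub
    rwa [ENNReal.toReal_ofReal (sub_nonneg.2 hvwx)] at h2
  have hfin : (u₀ (Fin.last n) : ℝ) ≤ β ^ (n+1) * (volume (cyl β w)).toReal := by
    calc (u₀ (Fin.last n) : ℝ) ≤ β * (betaT β)^[n] x := hM
      _ = β ^ (n+1) * (x - vw β w) := by rw [hT]; ring
      _ ≤ β ^ (n+1) * (volume (cyl β w)).toReal := by
          apply mul_le_mul_of_nonneg_left hvol (by positivity)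
  calc (t.card : ℝ) ≤ (u₀ (Fin.last n) : ℝ) + 1 := by exact_mod_cast hcard
    _ ≤ β ^ (n+1) * (volume (cyl β w)).toReal + 1 := by linarith

lemma upper (hb1 : 1 < β) :
    ∀ n, (((adm_finite hb1 n).toFinset.card : ℕ) : ℝ) ≤ ∑ k ∈ Finset.range (n+1), β ^ k := by
  intro n
  induction n with
  | zero =>
    have h1 : (adm_finite hb1 0).toFinset.card ≤ 1 :=
      Finset.card_le_one.2 fun a _ b _ => Subsingleton.elim a b
    have := (Nat.cast_le (α := ℝ)).2 h1
    simpa using this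
  | succ n ih =>
    set s := (adm_finite hb1 n).toFinset with hsdef
    set s' := (adm_finite hb1 (n+1)).toFinset with hs'def
    have hmap : ∀ u ∈ s', Fin.init u ∈ s := by
      intro u hu
      rw [hs'def, Set.Finite.mem_toFinset] at hu
      rw [hsdef, Set.Finite.mem_toFinset]
      obtain ⟨x, hx, hux⟩ := hu
      refine ⟨x, hx, fun i => ?_⟩
      rw [Fin.init, hux i.castSucc]
      congr 1
    have hcount := Finset.card_eq_sum_card_fiberwise hmap
    have hfib : ∀ w ∈ s, (((s'.filter fun u => Fin.init u = w).card : ℕ) : ℝ)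
        ≤ β ^ (n+1) * (volume (cyl β w)).toReal + 1 := by
      intro w _
      apply fiber_card hb1 n w
      intro u hu
      rw [Finset.mem_filter, hs'def, Set.Finite.mem_toFinset] at hu
      exact hu
    have hbn1 : (0:ℝ) ≤ β ^ (n+1) := by positivity
    calc (s'.card : ℝ)
        = ∑ w ∈ s, (((s'.filter fun u => Fin.init u = w).card : ℕ) : ℝ) := by
          rw [hcount]; push_cast; ring
      _ ≤ ∑ w ∈ s, (β ^ (n+1) * (volume (cyl β w)).toReal + 1) := Finset.sum_le_sum hfib
      _ = β ^ (n+1) * (∑ w ∈ s, (volume (cyl β w)).toReal) + s.card := by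
          rw [Finset.sum_add_distrib, ← Finset.mul_sum, Finset.sum_const]
          push_cast; ring
      _ ≤ β ^ (n+1) * 1 + s.card :=
          add_le_add_left (mul_le_mul_of_nonneg_left (sum_vol_le_one hb1 n) hbn1) _
      _ ≤ β ^ (n+1) + ∑ k ∈ Finset.range (n+1), β ^ k := by
          rw [mul_one]; exact add_le_add_right ih _
      _ = ∑ k ∈ Finset.range (n+1+1), β ^ k := by
          conv_rhs => rw [Finset.sum_range_succ]
          ring

lemma lower (hb1 : 1 < β) (n : ℕ) :
    β ^ n ≤ (((adm_finite hb1 n).toFinset.card : ℕ) : ℝ) := by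
  have hb0 : (0:ℝ) < β := lt_trans one_pos hb1
  have hbn : (0:ℝ) < β ^ n := pow_pos hb0 n
  set s := (adm_finite hb1 n).toFinset with hsdef
  have hcover : Set.Ico (0:ℝ) 1 ⊆ ⋃ w ∈ s, Set.Ico (vw β w) (vw β w + (β ^ n)⁻¹) := by
    intro x hx
    have hw : (fun i : Fin n => betaDigit β x i) ∈ admWords β n := ⟨x, hx, fun _ => rfl⟩
    have hxc : x ∈ cyl β (fun i : Fin n => betaDigit β x i) := ⟨hx, fun _ => rfl⟩
    exact Set.mem_biUnion ((Set.Finite.mem_toFinset _).2 hw) (cyl_subset_Ico hb1 _ hxc)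
  have h1 : volume (Set.Ico (0:ℝ) 1) ≤ ∑ w ∈ s, volume (Set.Ico (vw β w) (vw β w + (β ^ n)⁻¹)) :=
    le_trans (measure_mono hcover) (measure_biUnion_finset_le _ _)
  simp only [Real.volume_Ico, add_sub_cancel_left, sub_zero, Finset.sum_const,
    nsmul_eq_mul] at h1
  have hne : ((s.card : ENNReal) * ENNReal.ofReal (β ^ n)⁻¹) ≠ ⊤ :=
    ENNReal.mul_ne_top (by simp) ENNReal.ofReal_ne_top
  have h2 := ENNReal.toReal_mono hne h1
  rw [ENNReal.toReal_mul, ENNReal.toReal_ofReal (by positivity : (0:ℝ) ≤ (β ^ n)⁻¹),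
    ENNReal.toReal_ofReal zero_le_one] at h2
  have hcn : ((s.card : ENNReal)).toReal = (s.card : ℝ) := by simp
  rw [hcn] at h2
  have h3 := mul_le_mul_of_nonneg_right h2 hbn.le
  rw [one_mul, mul_assoc, inv_mul_cancel₀ hbn.ne', mul_one] at h3
  exact h3

end BetaAux

theorem card_admWords_bounds (β : ℝ) (hβ : 1 < β) (n : ℕ) (hn : 1 ≤ n) :
    β ^ n ≤ ((admWords β n).ncard : ℝ) ∧
      ((admWords β n).ncard : ℝ) ≤ β ^ (n + 1) / (β - 1) := by
  have hfin := BetaAux.adm_finite hβ n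
  have hcard : (admWords β n).ncard = hfin.toFinset.card :=
    Set.ncard_eq_toFinset_card _ hfin
  constructor
  · rw [hcard]; exact BetaAux.lower hβ n
  · rw [hcard]
    refine le_trans (BetaAux.upper hβ n) ?_
    rw [geom_sum_eq hβ.ne' (n+1)]
    have hb1 : (0:ℝ) < β - 1 := by linarith
    have hp : (0:ℝ) < β ^ (n+1) := pow_pos (lt_trans one_pos hβ) (n+1)
    rw [div_le_div_iff₀ hb1 hb1]
    nlinarith
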